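/- In the setting of the min-max comparison theorem, if moreover lim_{r→∞} f₁(r) = lim_{r→∞} f₂(r) = ∞, then A₁ has purely discrete spectrum (empty essential spectrum) if and only if A₂ has purely discrete spectrum. -/

import Mathlib

open Filter

/-- The `n`-th min-max value of a quadratic form `Q` with form core `D₀`. -/
noncomputable def minmaxValue {H : Type*} [NormedAddCommGroup H]
    [InnerProductSpace ℝ H] (D₀ : Submodule ℝ H) (Q : H → ℝ) (n : ℕ) : ℝ :=
  ⨆ Φ : Fin n → H,
    ⨅ ψ : {ψ : H // ψ ∈ D₀ ∧ ‖ψ‖ = 1 ∧ ∀ i, (inner ℝ (Φ i) ψ : ℝ) = 0},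
      Q (ψ : H)

lemma minmax_transfer {H : Type*} [NormedAddCommGroup H] [InnerProductSpace ℝ H]
    (D₀ : Submodule ℝ H) (Qa Qb : H → ℝ)
    (hQa : ∀ φ ∈ D₀, 0 ≤ Qa φ) (hQb : ∀ φ ∈ D₀, 0 ≤ Qb φ)
    (hab : ∀ T : ℝ, ∃ M : ℝ, 1 ≤ M ∧ ∀ ψ ∈ D₀, ‖ψ‖ = 1 → M ≤ Qb ψ → T ≤ Qa ψ)
    (hba : ∀ T : ℝ, ∃ M : ℝ, 1 ≤ M ∧ ∀ ψ ∈ D₀, ‖ψ‖ = 1 → M ≤ Qa ψ → T ≤ Qb ψ)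
    (h : Tendsto (fun n => minmaxValue D₀ Qb n) atTop atTop) :
    Tendsto (fun n => minmaxValue D₀ Qa n) atTop atTop := by
  rw [tendsto_atTop] at h ⊢
  intro T
  obtain ⟨M, hM1, hM⟩ := hab T
  filter_upwards [h (M + 1)] with n hn
  -- abbreviations
  set S : (Fin n → H) → Type _ :=
    fun Φ => {ψ : H // ψ ∈ D₀ ∧ ‖ψ‖ = 1 ∧ ∀ i, (inner ℝ (Φ i) ψ : ℝ) = 0} with hS
  have hbddb : ∀ (Φ : Fin n → H), BddBelow (Set.range fun ψ : S Φ => Qb (ψ : H)) := by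
    intro Φ
    refine ⟨0, ?_⟩
    rintro x ⟨ψ, rfl⟩
    exact hQb _ ψ.2.1
  have hbdda : ∀ (Φ : Fin n → H), BddBelow (Set.range fun ψ : S Φ => Qa (ψ : H)) := by
    intro Φ
    refine ⟨0, ?_⟩
    rintro x ⟨ψ, rfl⟩
    exact hQa _ ψ.2.1
  have hgb : minmaxValue D₀ Qb n = ⨆ Φ : Fin n → H, ⨅ ψ : S Φ, Qb (ψ : H) := rfl
  rw [hgb] at hn
  -- the Qb-family is bounded above
  have hBb : BddAbove (Set.range fun Φ : Fin n → H => ⨅ ψ : S Φ, Qb (ψ : H)) := by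
    by_contra h'
    rw [Real.iSup_of_not_bddAbove h'] at hn
    linarith
  obtain ⟨C, hC⟩ := hBb
  have hCle : ∀ Φ : Fin n → H, (⨅ ψ : S Φ, Qb (ψ : H)) ≤ C := by
    intro Φ; exact hC (Set.mem_range_self Φ)
  -- there is Φ with large Qb-infimum
  have hΦ : ∃ Φ : Fin n → H, M < ⨅ ψ : S Φ, Qb (ψ : H) := by
    by_contra h'
    push_neg at h'
    have := Real.iSup_le h' (by linarith : (0:ℝ) ≤ M)
    linarith
  obtain ⟨Φ, hΦ⟩ := hΦ
  -- the index set at Φ is nonempty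
  have hne : Nonempty (S Φ) := by
    by_contra hne
    rw [not_nonempty_iff] at hne
    rw [Real.iInf_of_isEmpty] at hΦ
    linarith
  -- all unit vectors orthogonal to Φ have large Qa
  have hTa : T ≤ ⨅ ψ : S Φ, Qa (ψ : H) := by
    refine le_ciInf fun ψ => ?_
    have h1 : (⨅ ψ : S Φ, Qb (ψ : H)) ≤ Qb (ψ : H) := ciInf_le (hbddb Φ) ψ
    exact hM _ ψ.2.1 ψ.2.2.1 (by linarith)
  -- the Qa-family is bounded above
  obtain ⟨M', hM'1, hM'⟩ := hba (C + 1)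
  have hBa : BddAbove (Set.range fun Φ : Fin n → H => ⨅ ψ : S Φ, Qa (ψ : H)) := by
    refine ⟨M', ?_⟩
    rintro x ⟨Φ', rfl⟩
    by_contra h'
    push_neg at h'
    have hne' : Nonempty (S Φ') := by
      by_contra hne'
      rw [not_nonempty_iff] at hne'
      rw [Real.iInf_of_isEmpty] at h'
      linarith
    have h2 : (C + 1 : ℝ) ≤ ⨅ ψ : S Φ', Qb (ψ : H) := by
      refine le_ciInf fun ψ => ?_
      have h1 : (⨅ ψ : S Φ', Qa (ψ : H)) ≤ Qa (ψ : H) := ciInf_le (hbdda Φ') ψ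
      exact hM' _ ψ.2.1 ψ.2.2.1 (by linarith)
    have := hCle Φ'
    linarith
  calc T ≤ ⨅ ψ : S Φ, Qa (ψ : H) := hTa
    _ ≤ minmaxValue D₀ Qa n := le_ciSup hBa Φ

/-- In the min-max comparison setting, if moreover
`f₁(r) → ∞` and `f₂(r) → ∞` as `r → ∞`, then `A₁` has purely discrete spectrum
iff `A₂` does; purely discrete spectrum is equivalent to `λ_n(A) → ∞`,
expressed here via the min-max values. -/
theorem minmax_discrete_iff
    {H : Type*} [NormedAddCommGroup H] [InnerProductSpace ℝ H] [CompleteSpace H]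
    (D₀ : Submodule ℝ H) (Q₁ Q₂ : H → ℝ)
    (hQ₁ : ∀ φ ∈ D₀, 0 ≤ Q₁ φ) (hQ₂ : ∀ φ ∈ D₀, 0 ≤ Q₂ φ)
    (f₁ f₂ : ℝ → ℝ)
    (hf₁c : ContinuousOn f₁ (Set.Ici 0)) (hf₂c : ContinuousOn f₂ (Set.Ici 0))
    (hf₁m : MonotoneOn f₁ (Set.Ici 0)) (hf₂m : MonotoneOn f₂ (Set.Ici 0))
    (hf₁ : Tendsto f₁ atTop atTop) (hf₂ : Tendsto f₂ atTop atTop)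
    (hcomp : ∀ φ ∈ D₀, ‖φ‖ = 1 → f₁ (Q₂ φ) ≤ Q₁ φ ∧ Q₁ φ ≤ f₂ (Q₂ φ)) :
    Tendsto (fun n => minmaxValue D₀ Q₁ n) atTop atTop ↔
      Tendsto (fun n => minmaxValue D₀ Q₂ n) atTop atTop := by
  -- transfer property: Q₂ large forces Q₁ large (via f₁ → ∞)
  have t12 : ∀ T : ℝ, ∃ M : ℝ, 1 ≤ M ∧ ∀ ψ ∈ D₀, ‖ψ‖ = 1 → M ≤ Q₂ ψ → T ≤ Q₁ ψ := by
    intro T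
    obtain ⟨M₀, hM₀⟩ := (eventually_atTop.mp (tendsto_atTop.mp hf₁ T))
    refine ⟨max 1 M₀, le_max_left _ _, fun ψ hψ hψn hψb => ?_⟩
    have h1 : M₀ ≤ Q₂ ψ := le_trans (le_max_right _ _) hψb
    have h2 : T ≤ f₁ (Q₂ ψ) := hM₀ _ h1
    exact le_trans h2 (hcomp ψ hψ hψn).1
  -- transfer property: Q₁ large forces Q₂ large (via monotonicity of f₂)
  have t21 : ∀ T : ℝ, ∃ M : ℝ, 1 ≤ M ∧ ∀ ψ ∈ D₀, ‖ψ‖ = 1 → M ≤ Q₁ ψ → T ≤ Q₂ ψ := by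
    intro T
    refine ⟨max 1 (f₂ (max T 0) + 1), le_max_left _ _, fun ψ hψ hψn hψb => ?_⟩
    by_contra hT
    push_neg at hT
    have hQ2ψ : (0:ℝ) ≤ Q₂ ψ := hQ₂ ψ hψ
    have hle : Q₂ ψ ≤ max T 0 := le_trans (le_of_lt hT) (le_max_left _ _)
    have h1 : f₂ (Q₂ ψ) ≤ f₂ (max T 0) :=
      hf₂m hQ2ψ (le_max_right T 0) hle
    have h2 : Q₁ ψ ≤ f₂ (Q₂ ψ) := (hcomp ψ hψ hψn).2
    have h3 : f₂ (max T 0) + 1 ≤ Q₁ ψ := le_trans (le_max_right _ _) hψb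
    linarith
  constructor
  · exact minmax_transfer D₀ Q₂ Q₁ hQ₂ hQ₁ t21 t12
  · exact minmax_transfer D₀ Q₁ Q₂ hQ₁ hQ₂ t12 t21
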